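/- Let (A,B) be a nonempty, bounded, closed and convex pair in a reflexive and strictly convex Banach space X, let T : A ∪ B → A ∪ B be a noncyclic relatively nonexpansive mapping, and suppose x* ∈ A₀ satisfies ‖x* − T(Px*)‖ = dist(A,B). Then Tx* = x*, P x* = T(Px*), and (x*, Px*) is a best proximity pair of T. -/
import Mathlib


open Set

/-- `setDist A B = inf {‖x - y‖ : x ∈ A, y ∈ B}`. -/
noncomputable def setDist {X : Type*} [NormedAddCommGroup X] (A B : Set X) : ℝ :=
  sInf ((fun p : X × X => ‖p.1 - p.2‖) '' (A ×ˢ B))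

/-- `A₀ = {x ∈ A : ‖x - y‖ = dist(A,B) for some y ∈ B}`. -/
noncomputable def proxA {X : Type*} [NormedAddCommGroup X] (A B : Set X) : Set X :=
  {x ∈ A | ∃ y ∈ B, ‖x - y‖ = setDist A B}

/-- `B₀ = {y ∈ B : ‖x - y‖ = dist(A,B) for some x ∈ A}`. -/
noncomputable def proxB {X : Type*} [NormedAddCommGroup X] (A B : Set X) : Set X :=
  {y ∈ B | ∃ x ∈ A, ‖x - y‖ = setDist A B}

lemma setDist_le {X : Type*} [NormedAddCommGroup X] {A B : Set X} {a b : X}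
    (ha : a ∈ A) (hb : b ∈ B) : setDist A B ≤ ‖a - b‖ := by
  apply csInf_le
  · exact ⟨0, by rintro r ⟨p, _, rfl⟩; positivity⟩
  · exact ⟨(a, b), ⟨ha, hb⟩, rfl⟩

/-- Uniqueness of the proximal point, via strict convexity. -/
lemma prox_unique {X : Type*} [NormedAddCommGroup X] [NormedSpace ℝ X]
    [StrictConvexSpace ℝ X] {A B : Set X} (hBconv : Convex ℝ B) {a p q : X}
    (ha : a ∈ A) (hp : p ∈ B) (hq : q ∈ B)
    (h1 : ‖a - p‖ = setDist A B) (h2 : ‖a - q‖ = setDist A B) : p = q := by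
  by_contra hne
  have hm : (1/2 : ℝ) • (p + q) ∈ B := by
    have := hBconv hp hq (by norm_num : (0:ℝ) ≤ 1/2) (by norm_num : (0:ℝ) ≤ 1/2)
      (by norm_num)
    simpa [smul_add] using this
  have hlt : ‖(1/2 : ℝ) • ((a - p) + (a - q))‖ < ‖a - p‖ :=
    (norm_midpoint_lt_iff (by rw [h1, h2])).2 (by
      intro h; exact hne (sub_right_injective h))
  have heq : a - (1/2 : ℝ) • (p + q) = (1/2 : ℝ) • ((a - p) + (a - q)) := by
    module
  have := setDist_le (A := A) (B := B) ha hm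
  rw [heq] at this
  rw [h1] at hlt
  linarith

theorem best_proximity_pair_of_cyclic_bpp
    {X : Type*} [NormedAddCommGroup X] [NormedSpace ℝ X] [CompleteSpace X]
    [StrictConvexSpace ℝ X]
    (hrefl : Function.Surjective (NormedSpace.inclusionInDoubleDual ℝ X))
    (A B : Set X) (hA : A.Nonempty) (hB : B.Nonempty)
    (hAbd : Bornology.IsBounded A) (hBbd : Bornology.IsBounded B)
    (hAcl : IsClosed A) (hBcl : IsClosed B)
    (hAconv : Convex ℝ A) (hBconv : Convex ℝ B)
    (T : X → X) (hTA : MapsTo T A A) (hTB : MapsTo T B B)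
    (hT : ∀ x ∈ A, ∀ y ∈ B, ‖T x - T y‖ ≤ ‖x - y‖)
    (x u : X) (hx : x ∈ proxA A B) (hu : u ∈ proxB A B)
    (hxu : ‖x - u‖ = setDist A B) (hbpp : ‖x - T u‖ = setDist A B) :
    T x = x ∧ u = T u ∧ ‖x - u‖ = setDist A B := by
  obtain ⟨hxA, -⟩ := hx
  obtain ⟨huB, -⟩ := hu
  have hTuB : T u ∈ B := hTB huB
  have huTu : u = T u := prox_unique hBconv hxA huB hTuB hxu hbpp
  have hTxA : T x ∈ A := hTA hxA
  have hTx : ‖T x - u‖ = setDist A B := by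
    refine le_antisymm ?_ (setDist_le hTxA huB)
    calc ‖T x - u‖ = ‖T x - T u‖ := by rw [← huTu]
      _ ≤ ‖x - u‖ := hT x hxA u huB
      _ = setDist A B := hxu
  -- uniqueness on the A side: x and T x are both proximal to u
  have hxTx : x = T x := by
    have h1 : ‖u - x‖ = setDist A B := by rwa [norm_sub_rev] at hxu
    have h2 : ‖u - T x‖ = setDist A B := by rwa [norm_sub_rev] at hTx
    -- use prox_unique with roles: a = u ∈ B, points in A, dist symmetric
    by_contra hne
    have hm : (1/2 : ℝ) • (x + T x) ∈ A := by
      have := hAconv hxA hTxA (by norm_num : (0:ℝ) ≤ 1/2) (by norm_num : (0:ℝ) ≤ 1/2)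
        (by norm_num)
      simpa [smul_add] using this
    have hlt : ‖(1/2 : ℝ) • ((u - x) + (u - T x))‖ < ‖u - x‖ :=
      (norm_midpoint_lt_iff (by rw [h1, h2])).2 (by
        intro h; exact hne (sub_right_injective h))
    have heq : u - (1/2 : ℝ) • (x + T x) = (1/2 : ℝ) • ((u - x) + (u - T x)) := by
      module
    have hle := setDist_le (A := A) (B := B) hm huB
    rw [norm_sub_rev, heq] at hle
    rw [h1] at hlt
    linarith
  exact ⟨hxTx.symm, huTu, hxu⟩
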